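/- For γ > 0 define s_γ = γ(5γ²+5γ+1)/(8(1+2γ)²(1+4γ)²(3+4γ)), t_γ = −γ²/(16(1+2γ)(1+4γ)²(3+4γ)), and z_γ = γ³/(8(1+2γ)²(1+4γ)²(3+4γ)), and let D_γ be the symmetric 6×6 real matrix whose (m,n) entry equals s_γ if m = n, equals z_γ if m + n = 7, and equals t_γ otherwise. Then det(D_γ) = γ⁶(γ+1)⁴ / (2¹⁸ (2γ+1)⁹ (4γ+1)⁷ (4γ+3)⁶), which is strictly positive for every γ > 0. -/

import Mathlib

noncomputable section

def sG (γ : ℝ) : ℝ :=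
  γ * (5 * γ ^ 2 + 5 * γ + 1) / (8 * (1 + 2 * γ) ^ 2 * (1 + 4 * γ) ^ 2 * (3 + 4 * γ))

def tG (γ : ℝ) : ℝ := -(γ ^ 2) / (16 * (1 + 2 * γ) * (1 + 4 * γ) ^ 2 * (3 + 4 * γ))

def zG (γ : ℝ) : ℝ := γ ^ 3 / (8 * (1 + 2 * γ) ^ 2 * (1 + 4 * γ) ^ 2 * (3 + 4 * γ))

/-- The matrix `D_γ` of the purely volumetric Dirichlet enrichment functionals: entry
`(m,n)` equals `s_γ` on the diagonal, `z_γ` on the anti-diagonal (`m + n = 7` in 1-based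
indexing, i.e. `m + n = 5` for `Fin 6`), and `t_γ` otherwise. -/
def Dvol (γ : ℝ) : Matrix (Fin 6) (Fin 6) ℝ :=
  Matrix.of fun m n : Fin 6 =>
    if m = n then sG γ else if (m : ℕ) + (n : ℕ) = 5 then zG γ else tG γ

lemma v34 : ((3 : Fin 4) : ℕ) = 3 := rfl
lemma v35 : ((3 : Fin 5) : ℕ) = 3 := rfl
lemma v36 : ((3 : Fin 6) : ℕ) = 3 := rfl
lemma cmk3 (a b c d e f : ℝ) (h : 3 < 6) : ![a,b,c,d,e,f] ⟨3,h⟩ = d := rfl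

set_option maxRecDepth 16000 in
set_option maxHeartbeats 8000000 in
lemma det6 (s t z : ℝ) :
    (!![s,t,t,t,t,z; t,s,t,t,z,t; t,t,s,z,t,t; t,t,z,s,t,t; t,z,t,t,s,t; z,t,t,t,t,s] :
        Matrix (Fin 6) (Fin 6) ℝ).det =
      (s + z + 4*t) * (s + z - 2*t)^2 * (s - z)^3 := by
  simp (config := { decide := true }) [Matrix.det_succ_row_zero, Fin.sum_univ_succ,
    Fin.succAbove, Fin.castSucc, Fin.castAdd, Fin.castLE, v34, v35, v36, cmk3]
  ring

lemma Dvol_eq (γ : ℝ) :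
    Dvol γ = !![sG γ, tG γ, tG γ, tG γ, tG γ, zG γ;
                tG γ, sG γ, tG γ, tG γ, zG γ, tG γ;
                tG γ, tG γ, sG γ, zG γ, tG γ, tG γ;
                tG γ, tG γ, zG γ, sG γ, tG γ, tG γ;
                tG γ, zG γ, tG γ, tG γ, sG γ, tG γ;
                zG γ, tG γ, tG γ, tG γ, tG γ, sG γ] := by
  ext i j
  fin_cases i <;> fin_cases j <;> rfl

/-- Determinant formula for `D_γ`: strictly positive for every `γ > 0`. -/
theorem Dvol_det (γ : ℝ) (hγ : 0 < γ) :
    (Dvol γ).det =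
        γ ^ 6 * (γ + 1) ^ 4 /
          (2 ^ 18 * (2 * γ + 1) ^ 9 * (4 * γ + 1) ^ 7 * (4 * γ + 3) ^ 6) ∧
      0 < (Dvol γ).det := by
  have hA : (0:ℝ) < 1 + 2 * γ := by linarith
  have hB : (0:ℝ) < 1 + 4 * γ := by linarith
  have hC : (0:ℝ) < 3 + 4 * γ := by linarith
  have hdet : (Dvol γ).det =
      γ ^ 6 * (γ + 1) ^ 4 /
        (2 ^ 18 * (2 * γ + 1) ^ 9 * (4 * γ + 1) ^ 7 * (4 * γ + 3) ^ 6) := by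
    rw [Dvol_eq, det6, sG, tG, zG]
    have h2 : (2:ℝ) * γ + 1 = 1 + 2 * γ := by ring
    have h4 : (4:ℝ) * γ + 1 = 1 + 4 * γ := by ring
    have h43 : (4:ℝ) * γ + 3 = 3 + 4 * γ := by ring
    rw [h2, h4, h43]
    field_simp
    ring
  refine ⟨hdet, ?_⟩
  rw [hdet]
  positivity

end
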